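/- Let G be a short dicotic game. Then G = 0 (mod D⁻) if and only if: o(G) = N; for every right option G^R of G there is a left option G^{RL} of G^R with G^{RL} ≽ 0 (mod D⁻); and for every left option G^L of G there is a right option G^{LR} of G^L with G^{LR} ≼ 0 (mod D⁻). -/

import Mathlib

/-! Port note: `SetTheory.PGame` has been removed from Mathlib; the pieces used below are
restored here verbatim from Mathlib (December 2024) with their old meaning. -/

universe u

namespace SetTheory

inductive PGame : Type (u + 1)
  | mk : ∀ α β : Type u, (α → PGame) → (β → PGame) → PGame

namespace PGame

def LeftMoves : PGame → Type u
  | mk l _ _ _ => l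

def RightMoves : PGame → Type u
  | mk _ r _ _ => r

def moveLeft : ∀ g : PGame, LeftMoves g → PGame
  | mk _l _ L _ => L

def moveRight : ∀ g : PGame, RightMoves g → PGame
  | mk _ _r _ R => R

inductive IsOption : PGame → PGame → Prop
  | moveLeft {x : PGame} (i : x.LeftMoves) : IsOption (x.moveLeft i) x
  | moveRight {x : PGame} (i : x.RightMoves) : IsOption (x.moveRight i) x

def Identical : PGame.{u} → PGame.{u} → Prop
  | mk _ _ xL xR, mk _ _ yL yR =>
    Relator.BiTotal (fun i j ↦ Identical (xL i) (yL j)) ∧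
      Relator.BiTotal (fun i j ↦ Identical (xR i) (yR j))

instance : Zero PGame :=
  ⟨⟨PEmpty, PEmpty, PEmpty.elim, PEmpty.elim⟩⟩

def star : PGame.{u} :=
  ⟨PUnit, PUnit, fun _ => 0, fun _ => 0⟩

def neg : PGame → PGame
  | ⟨l, r, L, R⟩ => ⟨r, l, fun i => neg (R i), fun i => neg (L i)⟩

instance : Neg PGame :=
  ⟨neg⟩

noncomputable instance : Add PGame.{u} :=
  ⟨fun x y => by
    induction x generalizing y with | mk xl xr _ _ IHxl IHxr => _
    induction y with | mk yl yr yL yR IHyl IHyr => _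
    have y := mk yl yr yL yR
    refine ⟨xl ⊕ yl, xr ⊕ yr, Sum.rec ?_ ?_, Sum.rec ?_ ?_⟩
    · exact fun i => IHxl i y
    · exact IHyl
    · exact fun i => IHxr i y
    · exact IHyr⟩

noncomputable def birthday : PGame.{u} → Ordinal.{u}
  | ⟨_, _, xL, xR⟩ =>
    max (Ordinal.lsub.{u, u} fun i => birthday (xL i)) (Ordinal.lsub.{u, u} fun i => birthday (xR i))

theorem birthday_moveLeft_lt {x : PGame} (i : x.LeftMoves) :
    (x.moveLeft i).birthday < x.birthday := by
  cases x; rw [birthday]; exact lt_max_of_lt_left (Ordinal.lt_lsub _ i)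

theorem birthday_moveRight_lt {x : PGame} (i : x.RightMoves) :
    (x.moveRight i).birthday < x.birthday := by
  cases x; rw [birthday]; exact lt_max_of_lt_right (Ordinal.lt_lsub _ i)

end PGame

end SetTheory

open SetTheory PGame

namespace MisereDicot

def Follower (G' G : PGame) : Prop := Relation.ReflTransGen PGame.IsOption G' G

def IsShort (G : PGame) : Prop :=
  ∀ G', Follower G' G → Finite G'.LeftMoves ∧ Finite G'.RightMoves

def Dicot (G : PGame) : Prop :=
  ∀ G', Follower G' G → (IsEmpty G'.LeftMoves ↔ IsEmpty G'.RightMoves)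

mutual
def LeftWinsFirst (G : PGame) : Prop :=
  IsEmpty G.LeftMoves ∨ ∃ i, ¬ RightWinsFirst (G.moveLeft i)
termination_by G.birthday
decreasing_by exact PGame.birthday_moveLeft_lt i

def RightWinsFirst (G : PGame) : Prop :=
  IsEmpty G.RightMoves ∨ ∃ j, ¬ LeftWinsFirst (G.moveRight j)
termination_by G.birthday
decreasing_by exact PGame.birthday_moveRight_lt j
end

inductive MOutcome : Type
  | L | N | P | R
deriving DecidableEq

instance : LE MOutcome := ⟨fun a b => a = b ∨ a = .R ∨ b = .L⟩

noncomputable def outcome (G : PGame) : MOutcome := by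
  classical
  exact if LeftWinsFirst G then (if RightWinsFirst G then .N else .L)
        else (if RightWinsFirst G then .R else .P)

def Dge (G H : PGame) : Prop :=
  ∀ X : PGame, IsShort X → Dicot X → outcome (H + X) ≤ outcome (G + X)

def Deq (G H : PGame) : Prop :=
  ∀ X : PGame, IsShort X → Dicot X → outcome (G + X) = outcome (H + X)

def Dgt (G H : PGame) : Prop := Dge G H ∧ ¬ Deq G H

def DInvertible (G : PGame) : Prop :=
  ∃ H : PGame, IsShort H ∧ Dicot H ∧ Deq (G + H) 0

/-- The left option `G^L_i` is reversible through its right option `(G^L_i)^R_j ≼ G`. -/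
def LeftReversibleAt (G : PGame) (i : G.LeftMoves) (j : (G.moveLeft i).RightMoves) : Prop :=
  Dge G ((G.moveLeft i).moveRight j)

def RightReversibleAt (G : PGame) (j : G.RightMoves) (i : (G.moveRight j).LeftMoves) : Prop :=
  Dge ((G.moveRight j).moveLeft i) G

/-- `G` has a dominated left option (removable by the Domination theorem). -/
def LeftDominated (G : PGame) : Prop :=
  ∃ i i' : G.LeftMoves, ¬ (G.moveLeft i).Identical (G.moveLeft i') ∧
    Dge (G.moveLeft i') (G.moveLeft i)

def RightDominated (G : PGame) : Prop :=
  ∃ j j' : G.RightMoves, ¬ (G.moveRight j).Identical (G.moveRight j') ∧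
    Dge (G.moveRight j) (G.moveRight j')

/-- `G` has a non-atomic reversible left option (bypassable). -/
def LeftNonAtomicReversible (G : PGame) : Prop :=
  ∃ i j, LeftReversibleAt G i j ∧ Nonempty ((G.moveLeft i).moveRight j).LeftMoves

def RightNonAtomicReversible (G : PGame) : Prop :=
  ∃ j i, RightReversibleAt G j i ∧ Nonempty ((G.moveRight j).moveLeft i).RightMoves

/-- `G` has an atomic-reversible left option to which the atomic-reversibility
replacement applies nontrivially (i.e. changing the set of options): either some
other left option is a winning first move for Left (so the option is removable),
or the option is not already `*`. -/
def LeftAtomicReducible (G : PGame) : Prop :=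
  ∃ i j, LeftReversibleAt G i j ∧ IsEmpty ((G.moveLeft i).moveRight j).LeftMoves ∧
    ((∃ i', ¬ (G.moveLeft i').Identical (G.moveLeft i) ∧ ¬ RightWinsFirst (G.moveLeft i')) ∨
      ¬ (G.moveLeft i).Identical star)

def RightAtomicReducible (G : PGame) : Prop :=
  ∃ j i, RightReversibleAt G j i ∧ IsEmpty ((G.moveRight j).moveLeft i).RightMoves ∧
    ((∃ j', ¬ (G.moveRight j').Identical (G.moveRight j) ∧ ¬ LeftWinsFirst (G.moveRight j')) ∨
      ¬ (G.moveRight j).Identical star)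

/-- The Substitution theorem applies to `G`: `G = {A | C}` with `A` an
atomic-reversible left option and `C` an atomic-reversible right option. -/
def SubstitutionReducible (G : PGame) : Prop :=
  (∀ i i' : G.LeftMoves, (G.moveLeft i).Identical (G.moveLeft i')) ∧
  (∀ j j' : G.RightMoves, (G.moveRight j).Identical (G.moveRight j')) ∧
  (∃ i j, LeftReversibleAt G i j ∧ IsEmpty ((G.moveLeft i).moveRight j).LeftMoves) ∧
  (∃ j i, RightReversibleAt G j i ∧ IsEmpty ((G.moveRight j).moveLeft i).RightMoves)

/-- `G` is in canonical form: no follower admits any of the misère-dicot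
simplifications (domination, non-atomic reversibility, atomic reversibility,
substitution) producing an equivalent game with a different set of options. -/
def CanonicalForm (G : PGame) : Prop :=
  ∀ G', Follower G' G →
    ¬ (LeftDominated G' ∨ RightDominated G' ∨
       LeftNonAtomicReversible G' ∨ RightNonAtomicReversible G' ∨
       LeftAtomicReducible G' ∨ RightAtomicReducible G' ∨
       SubstitutionReducible G')

/-- The game `*2 = {0, * | 0, *}`. -/
def star2 : PGame :=
  PGame.mk Bool Bool (fun b => cond b star 0) (fun b => cond b star 0)

open Classical in
/-- The adjoint `G°` of `G`. -/
noncomputable def adjoint : PGame → PGame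
  | PGame.mk l r L R =>
    if IsEmpty l ∧ IsEmpty r then star
    else if IsEmpty l then PGame.mk r PUnit (fun j => adjoint (R j)) (fun _ => 0)
    else if IsEmpty r then PGame.mk PUnit l (fun _ => 0) (fun i => adjoint (L i))
    else PGame.mk r l (fun j => adjoint (R j)) (fun i => adjoint (L i))

/-- A universe of short games: a class closed under taking options, disjunctive
sums and conjugates. -/
structure GameUniverse where
  mem : PGame → Prop
  short_mem : ∀ G, mem G → IsShort G
  isOption_mem : ∀ G G', mem G → PGame.IsOption G' G → mem G'
  add_mem : ∀ G H, mem G → mem H → mem (G + H)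
  neg_mem : ∀ G, mem G → mem (-G)

/-- `G ≽ H` modulo the universe `U`. -/
def UGe (U : GameUniverse) (G H : PGame) : Prop :=
  ∀ X : PGame, U.mem X → outcome (H + X) ≤ outcome (G + X)

/-- `G = H` modulo the universe `U`. -/
def UEq (U : GameUniverse) (G H : PGame) : Prop :=
  ∀ X : PGame, U.mem X → outcome (G + X) = outcome (H + X)

/-- `G ≻ H` modulo the universe `U`. -/
def UGt (U : GameUniverse) (G H : PGame) : Prop := UGe U G H ∧ ¬ UEq U G H

/-- `J` is invertible in the universe `U`. -/
def UInvertible (U : GameUniverse) (J : PGame) : Prop :=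
  ∃ J' : PGame, U.mem J' ∧ UEq U (J + J') 0

end MisereDicot

namespace SetTheory
namespace PGame

noncomputable def moveRecOn {C : PGame → Sort*} (x : PGame)
    (IH : ∀ y : PGame, (∀ i, C (y.moveLeft i)) → (∀ j, C (y.moveRight j)) → C y) : C x :=
  x.rec fun yl yr yL yR => IH (mk yl yr yL yR)

@[simp] theorem leftMoves_mk {xl xr : Type u} {xL : xl → PGame} {xR : xr → PGame} :
    (PGame.mk xl xr xL xR).LeftMoves = xl := rfl

@[simp] theorem rightMoves_mk {xl xr : Type u} {xL : xl → PGame} {xR : xr → PGame} :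
    (PGame.mk xl xr xL xR).RightMoves = xr := rfl

instance isEmpty_zero_leftMoves : IsEmpty (LeftMoves 0) := inferInstanceAs (IsEmpty PEmpty)
instance isEmpty_zero_rightMoves : IsEmpty (RightMoves 0) := inferInstanceAs (IsEmpty PEmpty)
instance finite_zero_leftMoves : Finite (LeftMoves 0) := inferInstanceAs (Finite PEmpty)
instance finite_zero_rightMoves : Finite (RightMoves 0) := inferInstanceAs (Finite PEmpty)
instance unique_star_leftMoves : Unique (LeftMoves star) := inferInstanceAs (Unique PUnit)
instance unique_star_rightMoves : Unique (RightMoves star) := inferInstanceAs (Unique PUnit)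
instance finite_star_leftMoves : Finite (LeftMoves star) := inferInstanceAs (Finite PUnit)
instance finite_star_rightMoves : Finite (RightMoves star) := inferInstanceAs (Finite PUnit)

@[simp] theorem star_leftMoves : star.LeftMoves = PUnit := rfl
@[simp] theorem star_rightMoves : star.RightMoves = PUnit := rfl
@[simp] theorem star_moveLeft (x) : star.moveLeft x = 0 := rfl
@[simp] theorem star_moveRight (x) : star.moveRight x = 0 := rfl

theorem leftMoves_add : ∀ x y : PGame.{u}, (x + y).LeftMoves = (x.LeftMoves ⊕ y.LeftMoves)
  | ⟨_, _, _, _⟩, ⟨_, _, _, _⟩ => rfl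

theorem rightMoves_add : ∀ x y : PGame.{u}, (x + y).RightMoves = (x.RightMoves ⊕ y.RightMoves)
  | ⟨_, _, _, _⟩, ⟨_, _, _, _⟩ => rfl

def toLeftMovesAdd {x y : PGame} : x.LeftMoves ⊕ y.LeftMoves ≃ (x + y).LeftMoves :=
  Equiv.cast (leftMoves_add x y).symm

def toRightMovesAdd {x y : PGame} : x.RightMoves ⊕ y.RightMoves ≃ (x + y).RightMoves :=
  Equiv.cast (rightMoves_add x y).symm

@[simp] theorem add_moveLeft_inl (x : PGame) {y : PGame} (i) :
    (x + y).moveLeft (toLeftMovesAdd (Sum.inl i)) = x.moveLeft i + y := by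
  cases x; cases y; rfl

@[simp] theorem add_moveLeft_inr (x : PGame) {y : PGame} (i) :
    (x + y).moveLeft (toLeftMovesAdd (Sum.inr i)) = x + y.moveLeft i := by
  cases x; cases y; rfl

@[simp] theorem add_moveRight_inl (x : PGame) {y : PGame} (i) :
    (x + y).moveRight (toRightMovesAdd (Sum.inl i)) = x.moveRight i + y := by
  cases x; cases y; rfl

@[simp] theorem add_moveRight_inr (x : PGame) {y : PGame} (i) :
    (x + y).moveRight (toRightMovesAdd (Sum.inr i)) = x + y.moveRight i := by
  cases x; cases y; rfl

end PGame
end SetTheory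

namespace MisereDicot

lemma lwf_iff (G : PGame) : LeftWinsFirst G ↔
    (IsEmpty G.LeftMoves ∨ ∃ i, ¬ RightWinsFirst (G.moveLeft i)) := by
  rw [LeftWinsFirst]

lemma rwf_iff (G : PGame) : RightWinsFirst G ↔
    (IsEmpty G.RightMoves ∨ ∃ j, ¬ LeftWinsFirst (G.moveRight j)) := by
  rw [RightWinsFirst]

lemma not_lwf_iff (G : PGame) : ¬ LeftWinsFirst G ↔
    (Nonempty G.LeftMoves ∧ ∀ i, RightWinsFirst (G.moveLeft i)) := by
  rw [lwf_iff]; push_neg; exact Iff.rfl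

lemma not_rwf_iff (G : PGame) : ¬ RightWinsFirst G ↔
    (Nonempty G.RightMoves ∧ ∀ j, LeftWinsFirst (G.moveRight j)) := by
  rw [rwf_iff]; push_neg; exact Iff.rfl

/-! ### Follower basics -/

lemma follower_rfl (G : PGame) : Follower G G := Relation.ReflTransGen.refl

lemma follower_moveLeft (G : PGame) (i) : Follower (G.moveLeft i) G :=
  Relation.ReflTransGen.single (PGame.IsOption.moveLeft i)

lemma follower_moveRight (G : PGame) (j) : Follower (G.moveRight j) G :=
  Relation.ReflTransGen.single (PGame.IsOption.moveRight j)

lemma IsShort.moveLeft {G : PGame} (hs : IsShort G) (i) : IsShort (G.moveLeft i) :=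
  fun G' h => hs G' (h.trans (follower_moveLeft G i))

lemma IsShort.moveRight {G : PGame} (hs : IsShort G) (j) : IsShort (G.moveRight j) :=
  fun G' h => hs G' (h.trans (follower_moveRight G j))

lemma Dicot.moveLeft {G : PGame} (hd : Dicot G) (i) : Dicot (G.moveLeft i) :=
  fun G' h => hd G' (h.trans (follower_moveLeft G i))

lemma Dicot.moveRight {G : PGame} (hd : Dicot G) (j) : Dicot (G.moveRight j) :=
  fun G' h => hd G' (h.trans (follower_moveRight G j))

lemma IsShort.finL {G : PGame} (hs : IsShort G) : Finite G.LeftMoves := (hs G (follower_rfl G)).1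
lemma IsShort.finR {G : PGame} (hs : IsShort G) : Finite G.RightMoves := (hs G (follower_rfl G)).2
lemma Dicot.empty_iff {G : PGame} (hd : Dicot G) : IsEmpty G.LeftMoves ↔ IsEmpty G.RightMoves :=
  hd G (follower_rfl G)

lemma isShort_of (G : PGame) (h1 : Finite G.LeftMoves) (h2 : Finite G.RightMoves)
    (hL : ∀ i, IsShort (G.moveLeft i)) (hR : ∀ j, IsShort (G.moveRight j)) : IsShort G := by
  intro G' h
  rcases Relation.ReflTransGen.cases_tail h with h | ⟨c, hc, hstep⟩
  · rw [← h]; exact ⟨h1, h2⟩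
  · cases hstep with
    | moveLeft i => exact hL i G' hc
    | moveRight j => exact hR j G' hc

lemma dicot_of (G : PGame) (h0 : IsEmpty G.LeftMoves ↔ IsEmpty G.RightMoves)
    (hL : ∀ i, Dicot (G.moveLeft i)) (hR : ∀ j, Dicot (G.moveRight j)) : Dicot G := by
  intro G' h
  rcases Relation.ReflTransGen.cases_tail h with h | ⟨c, hc, hstep⟩
  · rw [← h]; exact h0
  · cases hstep with
    | moveLeft i => exact hL i G' hc
    | moveRight j => exact hR j G' hc

/-! ### zero and star -/

lemma isShort_zero : IsShort 0 :=
  isShort_of 0 inferInstance inferInstance (fun i => isEmptyElim i) (fun j => isEmptyElim j)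

lemma dicot_zero : Dicot 0 :=
  dicot_of 0 (iff_of_true inferInstance inferInstance)
    (fun i => isEmptyElim i) (fun j => isEmptyElim j)

lemma isShort_star : IsShort star :=
  isShort_of star inferInstance inferInstance (fun _ => isShort_zero) (fun _ => isShort_zero)

lemma dicot_star : Dicot star :=
  dicot_of star (by simp) (fun _ => by rw [star_moveLeft]; exact dicot_zero)
    (fun _ => by rw [star_moveRight]; exact dicot_zero)

lemma lwf_zero : LeftWinsFirst 0 := (lwf_iff 0).2 (Or.inl inferInstance)
lemma rwf_zero : RightWinsFirst 0 := (rwf_iff 0).2 (Or.inl inferInstance)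

lemma not_lwf_star : ¬ LeftWinsFirst star := by
  rw [not_lwf_iff]
  exact ⟨⟨PUnit.unit⟩, fun i => by rw [star_moveLeft]; exact rwf_zero⟩

lemma not_rwf_star : ¬ RightWinsFirst star := by
  rw [not_rwf_iff]
  exact ⟨⟨PUnit.unit⟩, fun i => by rw [star_moveRight]; exact lwf_zero⟩

/-! ### adding an empty game -/

lemma add_empty_right (K : PGame) (hKL : IsEmpty K.LeftMoves) (hKR : IsEmpty K.RightMoves)
    (G : PGame) : (LeftWinsFirst (G + K) ↔ LeftWinsFirst G) ∧
      (RightWinsFirst (G + K) ↔ RightWinsFirst G) := by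
  induction G using PGame.moveRecOn with
  | _ G ihl ihr =>
    constructor
    · rw [lwf_iff, lwf_iff G]
      apply or_congr
      · rw [leftMoves_add, isEmpty_sum]; simp [hKL]
      · constructor
        · rintro ⟨k, hk⟩
          obtain ⟨i | i, rfl⟩ : ∃ s, toLeftMovesAdd s = k := ⟨toLeftMovesAdd.symm k, by simp⟩
          · rw [add_moveLeft_inl] at hk
            exact ⟨i, fun h => hk (((ihl i).2).2 h)⟩
          · exact isEmptyElim i
        · rintro ⟨i, hi⟩
          exact ⟨toLeftMovesAdd (Sum.inl i), by
            rw [add_moveLeft_inl]; exact fun h => hi (((ihl i).2).1 h)⟩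
    · rw [rwf_iff, rwf_iff G]
      apply or_congr
      · rw [rightMoves_add, isEmpty_sum]; simp [hKR]
      · constructor
        · rintro ⟨k, hk⟩
          obtain ⟨j | j, rfl⟩ : ∃ s, toRightMovesAdd s = k := ⟨toRightMovesAdd.symm k, by simp⟩
          · rw [add_moveRight_inl] at hk
            exact ⟨j, fun h => hk (((ihr j).1).2 h)⟩
          · exact isEmptyElim j
        · rintro ⟨j, hj⟩
          exact ⟨toRightMovesAdd (Sum.inl j), by
            rw [add_moveRight_inl]; exact fun h => hj (((ihr j).1).1 h)⟩

lemma add_empty_left (K : PGame) (hKL : IsEmpty K.LeftMoves) (hKR : IsEmpty K.RightMoves)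
    (G : PGame) : (LeftWinsFirst (K + G) ↔ LeftWinsFirst G) ∧
      (RightWinsFirst (K + G) ↔ RightWinsFirst G) := by
  induction G using PGame.moveRecOn with
  | _ G ihl ihr =>
    constructor
    · rw [lwf_iff, lwf_iff G]
      apply or_congr
      · rw [leftMoves_add, isEmpty_sum]; simp [hKL]
      · constructor
        · rintro ⟨k, hk⟩
          obtain ⟨i | i, rfl⟩ : ∃ s, toLeftMovesAdd s = k := ⟨toLeftMovesAdd.symm k, by simp⟩
          · exact isEmptyElim i
          · rw [add_moveLeft_inr] at hk
            exact ⟨i, fun h => hk (((ihl i).2).2 h)⟩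
        · rintro ⟨i, hi⟩
          exact ⟨toLeftMovesAdd (Sum.inr i), by
            rw [add_moveLeft_inr]; exact fun h => hi (((ihl i).2).1 h)⟩
    · rw [rwf_iff, rwf_iff G]
      apply or_congr
      · rw [rightMoves_add, isEmpty_sum]; simp [hKR]
      · constructor
        · rintro ⟨k, hk⟩
          obtain ⟨j | j, rfl⟩ : ∃ s, toRightMovesAdd s = k := ⟨toRightMovesAdd.symm k, by simp⟩
          · exact isEmptyElim j
          · rw [add_moveRight_inr] at hk
            exact ⟨j, fun h => hk (((ihr j).1).2 h)⟩
        · rintro ⟨j, hj⟩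
          exact ⟨toRightMovesAdd (Sum.inr j), by
            rw [add_moveRight_inr]; exact fun h => hj (((ihr j).1).1 h)⟩

/-! ### move helpers -/

lemma lwf_of_left_move {G : PGame} (i) (h : ¬ RightWinsFirst (G.moveLeft i)) :
    LeftWinsFirst G := (lwf_iff G).2 (Or.inr ⟨i, h⟩)

lemma rwf_of_right_move {G : PGame} (j) (h : ¬ LeftWinsFirst (G.moveRight j)) :
    RightWinsFirst G := (rwf_iff G).2 (Or.inr ⟨j, h⟩)

lemma lwf_add_inl {G K : PGame} (i : G.LeftMoves) (h : ¬ RightWinsFirst (G.moveLeft i + K)) :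
    LeftWinsFirst (G + K) :=
  lwf_of_left_move (toLeftMovesAdd (Sum.inl i)) (by rwa [add_moveLeft_inl])

lemma lwf_add_inr {G K : PGame} (i : K.LeftMoves) (h : ¬ RightWinsFirst (G + K.moveLeft i)) :
    LeftWinsFirst (G + K) :=
  lwf_of_left_move (toLeftMovesAdd (Sum.inr i)) (by rwa [add_moveLeft_inr])

lemma rwf_add_inl {G K : PGame} (j : G.RightMoves) (h : ¬ LeftWinsFirst (G.moveRight j + K)) :
    RightWinsFirst (G + K) :=
  rwf_of_right_move (toRightMovesAdd (Sum.inl j)) (by rwa [add_moveRight_inl])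

lemma rwf_add_inr {G K : PGame} (j : K.RightMoves) (h : ¬ LeftWinsFirst (G + K.moveRight j)) :
    RightWinsFirst (G + K) :=
  rwf_of_right_move (toRightMovesAdd (Sum.inr j)) (by rwa [add_moveRight_inr])

lemma not_lwf_add {G K : PGame} (hne : Nonempty G.LeftMoves ∨ Nonempty K.LeftMoves)
    (h1 : ∀ i, RightWinsFirst (G.moveLeft i + K))
    (h2 : ∀ i, RightWinsFirst (G + K.moveLeft i)) : ¬ LeftWinsFirst (G + K) := by
  rw [not_lwf_iff]
  constructor
  · exact (toLeftMovesAdd.nonempty_congr).1 (nonempty_sum.2 hne)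
  · intro k
    obtain ⟨i | i, rfl⟩ : ∃ s, toLeftMovesAdd s = k := ⟨toLeftMovesAdd.symm k, by simp⟩
    · rw [add_moveLeft_inl]; exact h1 i
    · rw [add_moveLeft_inr]; exact h2 i

lemma not_rwf_add {G K : PGame} (hne : Nonempty G.RightMoves ∨ Nonempty K.RightMoves)
    (h1 : ∀ j, LeftWinsFirst (G.moveRight j + K))
    (h2 : ∀ j, LeftWinsFirst (G + K.moveRight j)) : ¬ RightWinsFirst (G + K) := by
  rw [not_rwf_iff]
  constructor
  · exact (toRightMovesAdd.nonempty_congr).1 (nonempty_sum.2 hne)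
  · intro k
    obtain ⟨j | j, rfl⟩ : ∃ s, toRightMovesAdd s = k := ⟨toRightMovesAdd.symm k, by simp⟩
    · rw [add_moveRight_inl]; exact h1 j
    · rw [add_moveRight_inr]; exact h2 j

/-! ### adjoint -/


lemma adjoint_of_empty_both (H : PGame) (h1 : IsEmpty H.LeftMoves) (h2 : IsEmpty H.RightMoves) :
    adjoint H = star := by
  cases H with
  | mk l r L R => rw [adjoint]; rw [if_pos ⟨h1, h2⟩]

lemma adjoint_of_empty_left (H : PGame) (h1 : IsEmpty H.LeftMoves) (h2 : ¬ IsEmpty H.RightMoves) :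
    adjoint H = PGame.mk H.RightMoves PUnit (fun j => adjoint (H.moveRight j)) (fun _ => 0) := by
  cases H with
  | mk l r L R =>
    rw [adjoint, if_neg (fun h => h2 h.2), if_pos (show IsEmpty l from h1)]
    rfl

lemma adjoint_of_empty_right (H : PGame) (h1 : ¬ IsEmpty H.LeftMoves) (h2 : IsEmpty H.RightMoves) :
    adjoint H = PGame.mk PUnit H.LeftMoves (fun _ => 0) (fun i => adjoint (H.moveLeft i)) := by
  cases H with
  | mk l r L R =>
    rw [adjoint, if_neg (fun h => h1 h.1), if_neg (show ¬ IsEmpty l from h1), if_pos (show IsEmpty r from h2)]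
    rfl

lemma adjoint_of_nonempty (H : PGame) (h1 : ¬ IsEmpty H.LeftMoves) (h2 : ¬ IsEmpty H.RightMoves) :
    adjoint H = PGame.mk H.RightMoves H.LeftMoves
      (fun j => adjoint (H.moveRight j)) (fun i => adjoint (H.moveLeft i)) := by
  cases H with
  | mk l r L R =>
    rw [adjoint, if_neg (fun h => h1 h.1), if_neg (show ¬ IsEmpty l from h1), if_neg (show ¬ IsEmpty r from h2)]
    rfl

lemma finite_punit : Finite PUnit.{u+1} := inferInstance

lemma adjoint_dicot (H : PGame) : Dicot (adjoint H) := by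
  induction H using PGame.moveRecOn with
  | _ H ihl ihr =>
  by_cases h1 : IsEmpty H.LeftMoves <;> by_cases h2 : IsEmpty H.RightMoves
  · rw [adjoint_of_empty_both H h1 h2]; exact dicot_star
  · rw [adjoint_of_empty_left H h1 h2]
    exact dicot_of _ (iff_of_false h2 (by simp)) (fun j => ihr j) (fun _ => dicot_zero)
  · rw [adjoint_of_empty_right H h1 h2]
    exact dicot_of _ (iff_of_false (by simp) h1) (fun _ => dicot_zero) (fun i => ihl i)
  · rw [adjoint_of_nonempty H h1 h2]
    exact dicot_of _ (iff_of_false h2 h1) (fun j => ihr j) (fun i => ihl i)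

lemma adjoint_isShort (H : PGame) (hs : IsShort H) : IsShort (adjoint H) := by
  induction H using PGame.moveRecOn with
  | _ H ihl ihr =>
  by_cases h1 : IsEmpty H.LeftMoves <;> by_cases h2 : IsEmpty H.RightMoves
  · rw [adjoint_of_empty_both H h1 h2]; exact isShort_star
  · rw [adjoint_of_empty_left H h1 h2]
    exact isShort_of _ hs.finR finite_punit (fun j => ihr j (hs.moveRight j))
      (fun _ => isShort_zero)
  · rw [adjoint_of_empty_right H h1 h2]
    exact isShort_of _ finite_punit hs.finL (fun _ => isShort_zero)
      (fun i => ihl i (hs.moveLeft i))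
  · rw [adjoint_of_nonempty H h1 h2]
    exact isShort_of _ hs.finR hs.finL (fun j => ihr j (hs.moveRight j))
      (fun i => ihl i (hs.moveLeft i))

lemma adjoint_P (H : PGame) :
    ¬ LeftWinsFirst (H + adjoint H) ∧ ¬ RightWinsFirst (H + adjoint H) := by
  induction H using PGame.moveRecOn with
  | _ H ihl ihr =>
  by_cases h1 : IsEmpty H.LeftMoves <;> by_cases h2 : IsEmpty H.RightMoves
  · haveI := h1; haveI := h2
    rw [adjoint_of_empty_both H h1 h2]
    constructor
    · apply not_lwf_add
      · exact Or.inr ⟨PUnit.unit⟩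
      · exact fun i => isEmptyElim i
      · intro u
        rw [star_moveLeft]
        exact (add_empty_right 0 inferInstance inferInstance H).2.mpr ((rwf_iff H).2 (Or.inl h2))
    · apply not_rwf_add
      · exact Or.inr ⟨PUnit.unit⟩
      · exact fun j => isEmptyElim j
      · intro u
        rw [star_moveRight]
        exact (add_empty_right 0 inferInstance inferInstance H).1.mpr ((lwf_iff H).2 (Or.inl h1))
  · haveI := h1
    rw [adjoint_of_empty_left H h1 h2]
    have hne : Nonempty H.RightMoves := not_isEmpty_iff.1 h2
    constructor
    · apply not_lwf_add
      · exact Or.inr hne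
      · exact fun i => isEmptyElim i
      · intro j
        exact rwf_add_inl j (ihr j).1
    · apply not_rwf_add
      · exact Or.inl hne
      · intro j
        exact lwf_add_inr j (ihr j).2
      · intro u
        exact (add_empty_right 0 inferInstance inferInstance H).1.mpr ((lwf_iff H).2 (Or.inl h1))
  · haveI := h2
    rw [adjoint_of_empty_right H h1 h2]
    have hne : Nonempty H.LeftMoves := not_isEmpty_iff.1 h1
    constructor
    · apply not_lwf_add
      · exact Or.inl hne
      · intro i
        exact rwf_add_inr i (ihl i).1
      · intro u
        exact (add_empty_right 0 inferInstance inferInstance H).2.mpr ((rwf_iff H).2 (Or.inl h2))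
    · apply not_rwf_add
      · exact Or.inr hne
      · exact fun j => isEmptyElim j
      · intro i
        exact lwf_add_inl i (ihl i).2
  · rw [adjoint_of_nonempty H h1 h2]
    have hneL : Nonempty H.LeftMoves := not_isEmpty_iff.1 h1
    have hneR : Nonempty H.RightMoves := not_isEmpty_iff.1 h2
    constructor
    · apply not_lwf_add
      · exact Or.inr hneR
      · intro i
        exact rwf_add_inr i (ihl i).1
      · intro j
        exact rwf_add_inl j (ihr j).1
    · apply not_rwf_add
      · exact Or.inl hneR
      · intro j
        exact lwf_add_inr j (ihr j).2
      · intro i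
        exact lwf_add_inl i (ihl i).2


lemma MOutcome.le_def {a b : MOutcome} : a ≤ b ↔ (a = b ∨ a = MOutcome.R ∨ b = MOutcome.L) :=
  Iff.rfl

lemma outcome_N {G : PGame} (h1 : LeftWinsFirst G) (h2 : RightWinsFirst G) :
    outcome G = .N := by simp [outcome, h1, h2]

lemma outcome_L {G : PGame} (h1 : LeftWinsFirst G) (h2 : ¬ RightWinsFirst G) :
    outcome G = .L := by simp [outcome, h1, h2]

lemma outcome_R {G : PGame} (h1 : ¬ LeftWinsFirst G) (h2 : RightWinsFirst G) :
    outcome G = .R := by simp [outcome, h1, h2]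

lemma outcome_P {G : PGame} (h1 : ¬ LeftWinsFirst G) (h2 : ¬ RightWinsFirst G) :
    outcome G = .P := by simp [outcome, h1, h2]

lemma outcome_N_iff {G : PGame} : outcome G = .N ↔ LeftWinsFirst G ∧ RightWinsFirst G := by
  by_cases h1 : LeftWinsFirst G <;> by_cases h2 : RightWinsFirst G <;>
    simp [outcome, h1, h2]

lemma lwf_iff_outcome {G : PGame} :
    LeftWinsFirst G ↔ (outcome G = .L ∨ outcome G = .N) := by
  by_cases h1 : LeftWinsFirst G <;> by_cases h2 : RightWinsFirst G <;>
    simp [outcome, h1, h2]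

lemma rwf_iff_outcome {G : PGame} :
    RightWinsFirst G ↔ (outcome G = .N ∨ outcome G = .R) := by
  by_cases h1 : LeftWinsFirst G <;> by_cases h2 : RightWinsFirst G <;>
    simp [outcome, h1, h2]

lemma outcome_zero_add (W : PGame) : outcome (0 + W) = outcome W := by
  have h := add_empty_left 0 inferInstance inferInstance W
  by_cases hl : LeftWinsFirst W <;> by_cases hr : RightWinsFirst W <;>
    simp [outcome, h.1, h.2, hl, hr]

/-! ### the recursive predicates -/

def Pge (G : PGame) : Prop :=
  LeftWinsFirst G ∧ ∀ j, ∃ i, Pge ((G.moveRight j).moveLeft i)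
termination_by G.birthday
decreasing_by
  exact lt_trans (PGame.birthday_moveLeft_lt i) (PGame.birthday_moveRight_lt j)

lemma pge_iff (G : PGame) : Pge G ↔
    (LeftWinsFirst G ∧ ∀ j, ∃ i, Pge ((G.moveRight j).moveLeft i)) := by
  rw [Pge]

def Qge (G : PGame) : Prop :=
  RightWinsFirst G ∧ ∀ i, ∃ j, Qge ((G.moveLeft i).moveRight j)
termination_by G.birthday
decreasing_by
  exact lt_trans (PGame.birthday_moveRight_lt j) (PGame.birthday_moveLeft_lt i)

lemma qge_iff (G : PGame) : Qge G ↔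
    (RightWinsFirst G ∧ ∀ i, ∃ j, Qge ((G.moveLeft i).moveRight j)) := by
  rw [Qge]

/-! ### sufficiency -/

lemma mainP (G X : PGame) (hP : Pge G) (hXs : IsShort X) (hXd : Dicot X) :
    (LeftWinsFirst X → LeftWinsFirst (G + X)) ∧
      (¬ RightWinsFirst X → ¬ RightWinsFirst (G + X)) := by
  constructor
  · intro hX
    rcases (lwf_iff X).1 hX with hXe | ⟨x, hx⟩
    · have hXr : IsEmpty X.RightMoves := hXd.empty_iff.1 hXe
      rcases (lwf_iff G).1 ((pge_iff G).1 hP).1 with hGe | ⟨i, hi⟩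
      · refine (lwf_iff _).2 (Or.inl ?_)
        rw [leftMoves_add]
        exact isEmpty_sum.2 ⟨hGe, hXe⟩
      · exact lwf_add_inl i (fun h => hi ((add_empty_right X hXe hXr _).2.1 h))
    · exact lwf_add_inr x ((mainP G (X.moveLeft x) hP (hXs.moveLeft x) (hXd.moveLeft x)).2 hx)
  · intro hX
    obtain ⟨⟨x0⟩, hall⟩ := (not_rwf_iff X).1 hX
    apply not_rwf_add (Or.inr ⟨x0⟩)
    · intro j
      obtain ⟨i, hPi⟩ := ((pge_iff G).1 hP).2 j
      exact lwf_add_inl i ((mainP ((G.moveRight j).moveLeft i) X hPi hXs hXd).2 hX)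
    · intro x
      exact (mainP G (X.moveRight x) hP (hXs.moveRight x) (hXd.moveRight x)).1 (hall x)
termination_by (G.birthday, X.birthday)
decreasing_by
  all_goals first
    | exact Prod.Lex.right G.birthday (PGame.birthday_moveLeft_lt _)
    | exact Prod.Lex.right G.birthday (PGame.birthday_moveRight_lt _)
    | exact Prod.Lex.left _ _
        (lt_trans (PGame.birthday_moveLeft_lt _) (PGame.birthday_moveRight_lt _))
    | exact Prod.Lex.left _ _
        (lt_trans (PGame.birthday_moveRight_lt _) (PGame.birthday_moveLeft_lt _))

lemma mainQ (G X : PGame) (hQ : Qge G) (hXs : IsShort X) (hXd : Dicot X) :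
    (RightWinsFirst X → RightWinsFirst (G + X)) ∧
      (¬ LeftWinsFirst X → ¬ LeftWinsFirst (G + X)) := by
  constructor
  · intro hX
    rcases (rwf_iff X).1 hX with hXe | ⟨x, hx⟩
    · have hXl : IsEmpty X.LeftMoves := hXd.empty_iff.2 hXe
      rcases (rwf_iff G).1 ((qge_iff G).1 hQ).1 with hGe | ⟨j, hj⟩
      · refine (rwf_iff _).2 (Or.inl ?_)
        rw [rightMoves_add]
        exact isEmpty_sum.2 ⟨hGe, hXe⟩
      · exact rwf_add_inl j (fun h => hj ((add_empty_right X hXl hXe _).1.1 h))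
    · exact rwf_add_inr x ((mainQ G (X.moveRight x) hQ (hXs.moveRight x) (hXd.moveRight x)).2 hx)
  · intro hX
    obtain ⟨⟨x0⟩, hall⟩ := (not_lwf_iff X).1 hX
    apply not_lwf_add (Or.inr ⟨x0⟩)
    · intro i
      obtain ⟨j, hQj⟩ := ((qge_iff G).1 hQ).2 i
      exact rwf_add_inl j ((mainQ ((G.moveLeft i).moveRight j) X hQj hXs hXd).2 hX)
    · intro x
      exact (mainQ G (X.moveLeft x) hQ (hXs.moveLeft x) (hXd.moveLeft x)).1 (hall x)
termination_by (G.birthday, X.birthday)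
decreasing_by
  all_goals first
    | exact Prod.Lex.right G.birthday (PGame.birthday_moveLeft_lt _)
    | exact Prod.Lex.right G.birthday (PGame.birthday_moveRight_lt _)
    | exact Prod.Lex.left _ _
        (lt_trans (PGame.birthday_moveLeft_lt _) (PGame.birthday_moveRight_lt _))
    | exact Prod.Lex.left _ _
        (lt_trans (PGame.birthday_moveRight_lt _) (PGame.birthday_moveLeft_lt _))

/-! ### necessity: distinguishing games -/

lemma convertW (H X : PGame) (hs : IsShort H) (hd : Dicot H) (hXs : IsShort X) (hXd : Dicot X)
    (h1 : ¬ RightWinsFirst X) (h2 : RightWinsFirst (H + X)) :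
    ∃ W, IsShort W ∧ Dicot W ∧ LeftWinsFirst W ∧ ¬ LeftWinsFirst (H + W) := by
  have hneL : Nonempty H.LeftMoves := by
    by_contra h
    rw [not_nonempty_iff] at h
    exact h1 ((add_empty_left H h (hd.empty_iff.1 h) X).2.1 h2)
  refine ⟨PGame.mk PUnit H.LeftMoves (fun _ => X) (fun i => adjoint (H.moveLeft i)),
    ?_, ?_, ?_, ?_⟩
  · exact isShort_of _ finite_punit hs.finL (fun _ => hXs)
      (fun i => adjoint_isShort _ (hs.moveLeft i))
  · exact dicot_of _ (iff_of_false (by simp) (not_isEmpty_iff.2 hneL)) (fun _ => hXd)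
      (fun i => adjoint_dicot _)
  · exact lwf_of_left_move PUnit.unit h1
  · apply not_lwf_add
    · exact Or.inr ⟨PUnit.unit⟩
    · intro i
      exact rwf_add_inr i (adjoint_P (H.moveLeft i)).1
    · intro _
      exact h2

lemma convertW' (H X : PGame) (hs : IsShort H) (hd : Dicot H) (hXs : IsShort X) (hXd : Dicot X)
    (h1 : ¬ LeftWinsFirst X) (h2 : LeftWinsFirst (H + X)) :
    ∃ W, IsShort W ∧ Dicot W ∧ RightWinsFirst W ∧ ¬ RightWinsFirst (H + W) := by
  have hneR : Nonempty H.RightMoves := by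
    by_contra h
    rw [not_nonempty_iff] at h
    exact h1 ((add_empty_left H (hd.empty_iff.2 h) h X).1.1 h2)
  refine ⟨PGame.mk H.RightMoves PUnit (fun j => adjoint (H.moveRight j)) (fun _ => X),
    ?_, ?_, ?_, ?_⟩
  · exact isShort_of _ hs.finR finite_punit (fun j => adjoint_isShort _ (hs.moveRight j))
      (fun _ => hXs)
  · exact dicot_of _ (iff_of_false (not_isEmpty_iff.2 hneR) (by simp))
      (fun j => adjoint_dicot _) (fun _ => hXd)
  · exact rwf_of_right_move PUnit.unit h1
  · apply not_rwf_add
    · exact Or.inr ⟨PUnit.unit⟩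
    · intro j
      exact lwf_add_inr j (adjoint_P (H.moveRight j)).2
    · intro _
      exact h2

lemma claimC (G : PGame) (hs : IsShort G) (hd : Dicot G) (hn : ¬ Pge G) :
    ∃ W, IsShort W ∧ Dicot W ∧ LeftWinsFirst W ∧ ¬ LeftWinsFirst (G + W) := by
  rw [pge_iff] at hn
  rcases not_and_or.1 hn with hn | hn
  · exact ⟨0, isShort_zero, dicot_zero, lwf_zero,
      fun h => hn ((add_empty_right 0 inferInstance inferInstance G).1.1 h)⟩
  · push_neg at hn
    obtain ⟨j, hj⟩ := hn
    have hKs : IsShort (G.moveRight j) := hs.moveRight j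
    have hKd : Dicot (G.moveRight j) := hd.moveRight j
    by_cases hKe : IsEmpty (G.moveRight j).LeftMoves
    · apply convertW G star hs hd isShort_star dicot_star not_rwf_star
      apply rwf_add_inl j
      exact fun h => not_lwf_star
        ((add_empty_left (G.moveRight j) hKe (hKd.empty_iff.1 hKe) star).1.1 h)
    · have hne : Nonempty (G.moveRight j).LeftMoves := not_isEmpty_iff.1 hKe
      have hw : ∀ i, ∃ W, IsShort W ∧ Dicot W ∧ LeftWinsFirst W ∧
          ¬ LeftWinsFirst ((G.moveRight j).moveLeft i + W) :=
        fun i => claimC ((G.moveRight j).moveLeft i) (hKs.moveLeft i) (hKd.moveLeft i) (hj i)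
      choose w hws hwd hwl hwn using hw
      have hA0s : IsShort (PGame.mk PUnit PUnit (fun _ => 0) (fun _ => adjoint (G.moveRight j))) :=
        isShort_of _ finite_punit finite_punit (fun _ => isShort_zero)
          (fun _ => adjoint_isShort _ hKs)
      have hA0d : Dicot (PGame.mk PUnit PUnit (fun _ => 0) (fun _ => adjoint (G.moveRight j))) :=
        dicot_of _ (by simp) (fun _ => dicot_zero) (fun _ => adjoint_dicot _)
      apply convertW G
        (PGame.mk PUnit (G.moveRight j).LeftMoves
          (fun _ => PGame.mk PUnit PUnit (fun _ => 0) (fun _ => adjoint (G.moveRight j)))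
          (fun i => w i)) hs hd
      · exact isShort_of _ finite_punit hKs.finL (fun _ => hA0s) (fun i => hws i)
      · exact dicot_of _ (iff_of_false (by simp) (not_isEmpty_iff.2 hne))
          (fun _ => hA0d) (fun i => hwd i)
      · rw [not_rwf_iff]
        exact ⟨hne, fun i => hwl i⟩
      · apply rwf_add_inl j
        apply not_lwf_add
        · exact Or.inl hne
        · intro i
          exact rwf_add_inr i (hwn i)
        · intro _
          exact rwf_add_inr PUnit.unit (adjoint_P (G.moveRight j)).1
termination_by G.birthday
decreasing_by
  exact lt_trans (PGame.birthday_moveLeft_lt _) (PGame.birthday_moveRight_lt _)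

lemma claimC' (G : PGame) (hs : IsShort G) (hd : Dicot G) (hn : ¬ Qge G) :
    ∃ W, IsShort W ∧ Dicot W ∧ RightWinsFirst W ∧ ¬ RightWinsFirst (G + W) := by
  rw [qge_iff] at hn
  rcases not_and_or.1 hn with hn | hn
  · exact ⟨0, isShort_zero, dicot_zero, rwf_zero,
      fun h => hn ((add_empty_right 0 inferInstance inferInstance G).2.1 h)⟩
  · push_neg at hn
    obtain ⟨i, hi⟩ := hn
    have hKs : IsShort (G.moveLeft i) := hs.moveLeft i
    have hKd : Dicot (G.moveLeft i) := hd.moveLeft i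
    by_cases hKe : IsEmpty (G.moveLeft i).RightMoves
    · apply convertW' G star hs hd isShort_star dicot_star not_lwf_star
      apply lwf_add_inl i
      exact fun h => not_rwf_star
        ((add_empty_left (G.moveLeft i) (hKd.empty_iff.2 hKe) hKe star).2.1 h)
    · have hne : Nonempty (G.moveLeft i).RightMoves := not_isEmpty_iff.1 hKe
      have hw : ∀ j, ∃ W, IsShort W ∧ Dicot W ∧ RightWinsFirst W ∧
          ¬ RightWinsFirst ((G.moveLeft i).moveRight j + W) :=
        fun j => claimC' ((G.moveLeft i).moveRight j) (hKs.moveRight j) (hKd.moveRight j) (hi j)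
      choose w hws hwd hwr hwn using hw
      have hA0s : IsShort (PGame.mk PUnit PUnit (fun _ => adjoint (G.moveLeft i)) (fun _ => 0)) :=
        isShort_of _ finite_punit finite_punit (fun _ => adjoint_isShort _ hKs)
          (fun _ => isShort_zero)
      have hA0d : Dicot (PGame.mk PUnit PUnit (fun _ => adjoint (G.moveLeft i)) (fun _ => 0)) :=
        dicot_of _ (by simp) (fun _ => adjoint_dicot _) (fun _ => dicot_zero)
      apply convertW' G
        (PGame.mk (G.moveLeft i).RightMoves PUnit
          (fun j => w j)
          (fun _ => PGame.mk PUnit PUnit (fun _ => adjoint (G.moveLeft i)) (fun _ => 0))) hs hd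
      · exact isShort_of _ hKs.finR finite_punit (fun j => hws j) (fun _ => hA0s)
      · exact dicot_of _ (iff_of_false (not_isEmpty_iff.2 hne) (by simp))
          (fun j => hwd j) (fun _ => hA0d)
      · rw [not_lwf_iff]
        exact ⟨hne, fun j => hwr j⟩
      · apply lwf_add_inl i
        apply not_rwf_add
        · exact Or.inl hne
        · intro j
          exact lwf_add_inr j (hwn j)
        · intro _
          exact lwf_add_inr PUnit.unit (adjoint_P (G.moveLeft i)).2
termination_by G.birthday
decreasing_by
  exact lt_trans (PGame.birthday_moveRight_lt _) (PGame.birthday_moveLeft_lt _)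


lemma dge_zero_iff (G : PGame) (hs : IsShort G) (hd : Dicot G) : Dge G 0 ↔ Pge G := by
  constructor
  · intro h
    by_contra hn
    obtain ⟨W, hWs, hWd, hW, hGW⟩ := claimC G hs hd hn
    have hle := h W hWs hWd
    rw [outcome_zero_add] at hle
    rcases MOutcome.le_def.1 hle with he | he | he
    · exact hGW (lwf_iff_outcome.2 (by rw [← he]; exact lwf_iff_outcome.1 hW))
    · rcases lwf_iff_outcome.1 hW with h' | h' <;> simp_all
    · exact hGW (lwf_iff_outcome.2 (Or.inl he))
  · intro hP X hXs hXd
    rw [outcome_zero_add]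
    have h := mainP G X hP hXs hXd
    apply MOutcome.le_def.2
    by_cases hl : LeftWinsFirst X <;> by_cases hr : RightWinsFirst X
    · rcases lwf_iff_outcome.1 (h.1 hl) with h' | h'
      · exact Or.inr (Or.inr h')
      · rw [outcome_N hl hr, h']
        exact Or.inl rfl
    · rw [outcome_L hl hr, outcome_L (h.1 hl) (h.2 hr)]
      exact Or.inl rfl
    · rw [outcome_R hl hr]
      exact Or.inr (Or.inl rfl)
    · by_cases hgl : LeftWinsFirst (G + X)
      · exact Or.inr (Or.inr (outcome_L hgl (h.2 hr)))
      · rw [outcome_P hl hr, outcome_P hgl (h.2 hr)]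
        exact Or.inl rfl

lemma zero_dge_iff (G : PGame) (hs : IsShort G) (hd : Dicot G) : Dge 0 G ↔ Qge G := by
  constructor
  · intro h
    by_contra hn
    obtain ⟨W, hWs, hWd, hW, hGW⟩ := claimC' G hs hd hn
    have hle := h W hWs hWd
    rw [outcome_zero_add] at hle
    rcases MOutcome.le_def.1 hle with he | he | he
    · exact hGW (rwf_iff_outcome.2 (by rw [he]; exact rwf_iff_outcome.1 hW))
    · exact hGW (rwf_iff_outcome.2 (Or.inr he))
    · rcases rwf_iff_outcome.1 hW with h' | h' <;> simp_all
  · intro hQ X hXs hXd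
    rw [outcome_zero_add]
    have h := mainQ G X hQ hXs hXd
    apply MOutcome.le_def.2
    by_cases hl : LeftWinsFirst X <;> by_cases hr : RightWinsFirst X
    · rcases rwf_iff_outcome.1 (h.1 hr) with h' | h'
      · rw [outcome_N hl hr, h']
        exact Or.inl rfl
      · rw [h']
        exact Or.inr (Or.inl rfl)
    · exact Or.inr (Or.inr (outcome_L hl hr))
    · rw [outcome_R hl hr, outcome_R (h.2 hl) (h.1 hr)]
      exact Or.inl rfl
    · by_cases hgr : RightWinsFirst (G + X)
      · rw [outcome_R (h.2 hl) hgr]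
        exact Or.inr (Or.inl rfl)
      · rw [outcome_P hl hr, outcome_P (h.2 hl) hgr]
        exact Or.inl rfl

lemma mout_antisymm {a b : MOutcome} (h1 : a ≤ b) (h2 : b ≤ a) : a = b := by
  rcases MOutcome.le_def.1 h1 with h | h | h
  · exact h
  · rcases MOutcome.le_def.1 h2 with h' | h' | h'
    · exact h'.symm
    · rw [h, h']
    · exact absurd (h'.symm.trans h) (by decide)
  · rcases MOutcome.le_def.1 h2 with h' | h' | h'
    · exact h'.symm
    · exact absurd (h.symm.trans h') (by decide)
    · rw [h, h']

lemma deq_zero_iff (G : PGame) : Deq G 0 ↔ (Dge G 0 ∧ Dge 0 G) := by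
  constructor
  · intro h
    exact ⟨fun X hs hd => MOutcome.le_def.2 (Or.inl (h X hs hd).symm),
           fun X hs hd => MOutcome.le_def.2 (Or.inl (h X hs hd))⟩
  · rintro ⟨h1, h2⟩ X hs hd
    exact mout_antisymm (h2 X hs hd) (h1 X hs hd)

/-- `G = 0` (mod `D⁻`) iff `o(G) = N`, every right option of `G` has a
left option `≽ 0`, and every left option of `G` has a right option `≼ 0`. -/
theorem stmt7 (G : PGame) (hs : IsShort G) (hd : Dicot G) :
    Deq G 0 ↔ outcome G = MOutcome.N ∧
      (∀ j : G.RightMoves, ∃ i : (G.moveRight j).LeftMoves,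
        Dge ((G.moveRight j).moveLeft i) 0) ∧
      (∀ i : G.LeftMoves, ∃ j : (G.moveLeft i).RightMoves,
        Dge 0 ((G.moveLeft i).moveRight j)) := by
  rw [deq_zero_iff, dge_zero_iff G hs hd, zero_dge_iff G hs hd, pge_iff, qge_iff,
    outcome_N_iff]
  constructor
  · rintro ⟨⟨hL, hP⟩, hR, hQ⟩
    refine ⟨⟨hL, hR⟩, fun j => ?_, fun i => ?_⟩
    · obtain ⟨i, hi⟩ := hP j
      exact ⟨i, (dge_zero_iff _ ((hs.moveRight j).moveLeft i)
        ((hd.moveRight j).moveLeft i)).2 hi⟩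
    · obtain ⟨j, hj⟩ := hQ i
      exact ⟨j, (zero_dge_iff _ ((hs.moveLeft i).moveRight j)
        ((hd.moveLeft i).moveRight j)).2 hj⟩
  · rintro ⟨⟨hL, hR⟩, hP, hQ⟩
    refine ⟨⟨hL, fun j => ?_⟩, hR, fun i => ?_⟩
    · obtain ⟨i, hi⟩ := hP j
      exact ⟨i, (dge_zero_iff _ ((hs.moveRight j).moveLeft i)
        ((hd.moveRight j).moveLeft i)).1 hi⟩
    · obtain ⟨j, hj⟩ := hQ i
      exact ⟨j, (zero_dge_iff _ ((hs.moveLeft i).moveRight j)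
        ((hd.moveLeft i).moveRight j)).1 hj⟩

end MisereDicot
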